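/- Let M_t, M_c, M_r be positive integers with M_r < M_t + M_c. Then D_no(M_t,M_c,M_r) is a proper subset of D_CSI(M_t,M_c,M_r). -/

import Mathlib

/-- The delayed-feedback DoF region of the two-user MIMO interference channel
with a cognitive relay, with `Mt` antennas per transmitter, `Mc` antennas at
the cognitive relay, and `Mr` antennas per receiver. -/
def DCSI (Mt Mc Mr : ℕ) : Set (ℝ × ℝ) :=
  {p : ℝ × ℝ | 0 ≤ p.1 ∧ 0 ≤ p.2 ∧
    p.1 ≤ min (Mr : ℝ) ((Mt : ℝ) + (Mc : ℝ)) ∧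
    p.2 ≤ min (Mr : ℝ) ((Mt : ℝ) + (Mc : ℝ)) ∧
    p.1 / min (Mr : ℝ) ((Mt : ℝ) + (Mc : ℝ))
      + p.2 / min (2 * (Mr : ℝ)) ((Mt : ℝ) + (Mc : ℝ))
      ≤ min (Mr : ℝ) (2 * (Mt : ℝ) + (Mc : ℝ)) / min (Mr : ℝ) ((Mt : ℝ) + (Mc : ℝ)) ∧
    p.1 / min (2 * (Mr : ℝ)) ((Mt : ℝ) + (Mc : ℝ))
      + p.2 / min (Mr : ℝ) ((Mt : ℝ) + (Mc : ℝ))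
      ≤ min (Mr : ℝ) (2 * (Mt : ℝ) + (Mc : ℝ)) / min (Mr : ℝ) ((Mt : ℝ) + (Mc : ℝ))}

/-- The no-feedback DoF region of the two-user MIMO interference channel
with a cognitive relay. -/
def Dno (Mt Mc Mr : ℕ) : Set (ℝ × ℝ) :=
  {p : ℝ × ℝ | 0 ≤ p.1 ∧ 0 ≤ p.2 ∧
    p.1 ≤ min (Mr : ℝ) ((Mt : ℝ) + (Mc : ℝ)) ∧
    p.2 ≤ min (Mr : ℝ) ((Mt : ℝ) + (Mc : ℝ)) ∧
    p.1 + p.2 ≤ min (Mr : ℝ) (2 * (Mt : ℝ) + (Mc : ℝ))}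

/-- When `Mr < Mt + Mc`, delayed feedback strictly enlarges the DoF region of
the MIMO interference channel with a cognitive relay. -/
theorem Dno_ssubset_DCSI_of_antennas (Mt Mc Mr : ℕ) (hMt : 0 < Mt) (hMc : 0 < Mc)
    (hMr : 0 < Mr) (h : Mr < Mt + Mc) :
    Dno Mt Mc Mr ⊂ DCSI Mt Mc Mr := by
  have hMr' : (0:ℝ) < Mr := by exact_mod_cast hMr
  have hlt : (Mr:ℝ) < (Mt:ℝ) + Mc := by exact_mod_cast h
  have hMt' : (0:ℝ) ≤ Mt := Nat.cast_nonneg _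
  have h1 : min (Mr:ℝ) ((Mt:ℝ) + Mc) = (Mr:ℝ) := min_eq_left hlt.le
  have h3 : min (Mr:ℝ) (2 * (Mt:ℝ) + Mc) = (Mr:ℝ) := min_eq_left (by linarith)
  set b : ℝ := min (2 * (Mr:ℝ)) ((Mt:ℝ) + Mc) with hbdef
  have hab : (Mr:ℝ) < b := lt_min (by linarith) hlt
  have hb : (0:ℝ) < b := lt_trans hMr' hab
  constructor
  · intro p hp
    obtain ⟨h01, h02, ha, hb2, hs⟩ := hp
    rw [h1] at ha hb2
    rw [h3] at hs
    refine ⟨h01, h02, by rw [h1]; exact ha, by rw [h1]; exact hb2, ?_, ?_⟩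
    · rw [h1, h3, div_self hMr'.ne']
      have k1 : p.2 / b ≤ p.2 / Mr := by gcongr
      have k2 : p.1 / Mr + p.2 / Mr ≤ 1 := by
        rw [← add_div, div_le_one hMr']; exact hs
      linarith
    · rw [h1, h3, div_self hMr'.ne']
      have k1 : p.1 / b ≤ p.1 / Mr := by gcongr
      have k2 : p.1 / Mr + p.2 / Mr ≤ 1 := by
        rw [← add_div, div_le_one hMr']; exact hs
      linarith
  · intro hsub
    set d : ℝ := (Mr:ℝ) * b / ((Mr:ℝ) + b) with hddef
    have hdpos : 0 < d := by positivity
    have hdle : d ≤ (Mr:ℝ) := by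
      rw [hddef, div_le_iff₀ (by linarith)]; nlinarith
    have hsum : d / Mr + d / b = 1 := by
      rw [hddef]; field_simp; ring
    have hmem : (d, d) ∈ DCSI Mt Mc Mr := by
      refine ⟨hdpos.le, hdpos.le, ?_, ?_, ?_, ?_⟩ <;>
        simp only [h1, h3, div_self hMr'.ne'] <;>
        first
          | exact hdle
          | (rw [← hbdef]; linarith [hsum])
    have hno : (d, d) ∈ Dno Mt Mc Mr := hsub hmem
    obtain ⟨-, -, -, -, hs⟩ := hno
    rw [h3] at hs
    -- 2d ≤ Mr contradicts b > Mr
    have : 2 * ((Mr:ℝ) * b) ≤ (Mr:ℝ) * ((Mr:ℝ) + b) := by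
      have := hs
      simp only at this
      rw [hddef] at this
      rw [← add_div, div_le_iff₀ (by linarith)] at this
      nlinarith
    nlinarith
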